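/- arXiv:2502.19914 — 2 statements merged into one kernel-verified Lean document; each statement's English description precedes it below -/
import Mathlib

section
/- Let p and q be distinct primes. The algebraic connectivity (second-smallest Laplacian eigenvalue) of the power graph of D_{2pq} is 1, and the largest Laplacian eigenvalue is 2pq with multiplicity 1. -/
open Polynomial
open Matrix Finset DihedralGroup
open scoped RealInnerProductSpace
set_option linter.unusedSectionVars false



section General
variable {V : Type*} [Fintype V] [DecidableEq V] (G : SimpleGraph V) [DecidableRel G.Adj]

lemma row_sq (v : V → ℝ) (h0 : ∑ x, v x = 0) (i : V) :
    ∑ j, (v i - v j)^2 = (Fintype.card V) * (v i)^2 + v ⬝ᵥ v := by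
  rw [Finset.sum_congr rfl (fun j _ => by ring :
    ∀ j ∈ Finset.univ, (v i - v j)^2 = (v i)^2 - 2 * v i * v j + (v j)^2)]
  have hdot : v ⬝ᵥ v = ∑ j, (v j)^2 := by simp [dotProduct, sq]
  simp [Finset.sum_add_distrib, Finset.sum_sub_distrib, ← Finset.mul_sum, Finset.card_univ,
    h0, hdot]

lemma sq_sum_identity (v : V → ℝ) (h0 : ∑ x, v x = 0) :
    ∑ i, ∑ j, (v i - v j)^2 = 2 * (Fintype.card V) * (v ⬝ᵥ v) := by
  simp_rw [row_sq v h0, Finset.sum_add_distrib, ← Finset.mul_sum, Finset.sum_const,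
    Finset.card_univ, nsmul_eq_mul]
  have hdot : v ⬝ᵥ v = ∑ j, (v j)^2 := by simp [dotProduct, sq]
  rw [← hdot]; ring


lemma quad_eq (v : V → ℝ) :
    v ⬝ᵥ (G.lapMatrix ℝ *ᵥ v) =
      (∑ i, ∑ j, if G.Adj i j then (v i - v j)^2 else 0) / 2 := by
  rw [← Matrix.toLinearMap₂'_apply', SimpleGraph.lapMatrix_toLinearMap₂']

lemma lap_mulVec (v : V → ℝ) (x : V) :
    (G.lapMatrix ℝ *ᵥ v) x = ∑ y ∈ G.neighborFinset x, (v x - v y) := by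
  rw [SimpleGraph.lapMatrix_mulVec_apply, Finset.sum_sub_distrib, Finset.sum_const,
    SimpleGraph.card_neighborFinset_eq_degree, nsmul_eq_mul]

lemma eigen_sum_zero {v : V → ℝ} {μ : ℝ} (h : G.lapMatrix ℝ *ᵥ v = μ • v) (hμ : μ ≠ 0) :
    ∑ x, v x = 0 := by
  have h1 := congrArg (fun w => dotProduct (fun _ => (1:ℝ)) w) h
  simp only [Matrix.dotProduct_mulVec] at h1
  have h2 : (fun _ => (1:ℝ)) ᵥ* G.lapMatrix ℝ = 0 := by
    rw [← Matrix.mulVec_transpose, (SimpleGraph.isSymm_lapMatrix G (R := ℝ)).eq,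
      SimpleGraph.lapMatrix_mulVec_const_eq_zero]
  rw [h2] at h1
  simp only [zero_dotProduct, dotProduct_smul] at h1
  have h3 : (fun _ => (1:ℝ)) ⬝ᵥ v = ∑ x, v x := by
    simp [dotProduct]
  rw [h3] at h1
  rcases mul_eq_zero.mp h1.symm with h | h
  · exact absurd h hμ
  · exact h

lemma quad_le (v : V → ℝ) (h0 : ∑ x, v x = 0) :
    v ⬝ᵥ (G.lapMatrix ℝ *ᵥ v) ≤ (Fintype.card V) * (v ⬝ᵥ v) := by
  rw [quad_eq]
  have hle : ∑ i, ∑ j, (if G.Adj i j then (v i - v j)^2 else 0)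
      ≤ ∑ i, ∑ j, (v i - v j)^2 := by
    refine Finset.sum_le_sum fun i _ => Finset.sum_le_sum fun j _ => ?_
    split
    · exact le_refl _
    · positivity
  rw [sq_sum_identity v h0] at hle
  linarith

lemma quad_ge {u : V} (hu : ∀ x, x ≠ u → G.Adj u x) (v : V → ℝ) (h0 : ∑ x, v x = 0) :
    v ⬝ᵥ v ≤ v ⬝ᵥ (G.lapMatrix ℝ *ᵥ v) := by
  rw [quad_eq]
  set f : V → V → ℝ := fun i j => if G.Adj i j then (v i - v j)^2 else 0 with hf
  have hfnn : ∀ i j, 0 ≤ f i j := by intro i j; simp only [hf]; split <;> positivity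
  have hrow : ∀ j, f u j = (v u - v j)^2 := by
    intro j
    by_cases hj : j = u
    · subst hj; simp [hf]
    · simp [hf, hu j hj]
  have hsymm : ∀ i, f i u = f u i := by
    intro i
    simp only [hf]
    rw [if_congr (G.adj_comm i u) rfl rfl, show (v i - v u)^2 = (v u - v i)^2 by ring]
  have h1 : ∑ j, f u j = (Fintype.card V) * (v u)^2 + v ⬝ᵥ v := by
    simp_rw [hrow]; exact row_sq v h0 u
  have hsplit : ∑ i, ∑ j, f i j = (∑ j, f u j) + ∑ i ∈ Finset.univ.erase u, ∑ j, f i j :=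
    (Finset.add_sum_erase _ (fun i => ∑ j, f i j) (Finset.mem_univ u)).symm
  have h2 : ∑ i ∈ Finset.univ.erase u, f i u ≤ ∑ i ∈ Finset.univ.erase u, ∑ j, f i j :=
    Finset.sum_le_sum fun i _ => Finset.single_le_sum (fun j _ => hfnn i j) (Finset.mem_univ u)
  have h3 : ∑ i ∈ Finset.univ.erase u, f i u = (∑ j, f u j) - f u u := by
    simp_rw [hsymm]
    rw [eq_sub_iff_add_eq, add_comm]
    exact Finset.add_sum_erase _ (fun i => f u i) (Finset.mem_univ u)
  have h4 : f u u = 0 := by simp [hf]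
  have hcard : (0:ℝ) ≤ (Fintype.card V) * (v u)^2 := by positivity
  nlinarith [hsplit, h1, h2, h3]
end General

section Gen2
variable {V : Type*} [Fintype V] [DecidableEq V]

lemma eval_charpoly' (M : Matrix V V ℝ) (μ : ℝ) :
    M.charpoly.eval μ = ((μ • (1 : Matrix V V ℝ)) - M).det := by
  rw [Matrix.charpoly, ← Polynomial.coe_evalRingHom, RingHom.map_det]
  congr 1
  ext i j
  by_cases h : i = j
  · subst h
    simp [Matrix.charmatrix_apply, Matrix.one_apply, Matrix.diagonal_apply]
  · simp [Matrix.charmatrix_apply, Matrix.one_apply, Matrix.diagonal_apply, h]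

lemma root_iff_eigen (M : Matrix V V ℝ) (μ : ℝ) :
    μ ∈ M.charpoly.roots ↔ ∃ v, v ≠ 0 ∧ M *ᵥ v = μ • v := by
  rw [Polynomial.mem_roots (M.charpoly_monic.ne_zero), Polynomial.IsRoot.def, eval_charpoly',
    ← Matrix.exists_mulVec_eq_zero_iff]
  constructor
  · rintro ⟨v, hv, h⟩
    refine ⟨v, hv, ?_⟩
    rw [Matrix.sub_mulVec, Matrix.smul_mulVec, Matrix.one_mulVec, sub_eq_zero] at h
    exact h.symm.trans rfl
  · rintro ⟨v, hv, h⟩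
    refine ⟨v, hv, ?_⟩
    rw [Matrix.sub_mulVec, Matrix.smul_mulVec, Matrix.one_mulVec, h, sub_self]
end Gen2

section Gen3
variable {V : Type*} [Fintype V] [DecidableEq V]

lemma charpoly_conj (U W M : Matrix V V ℝ) (h1 : U * W = 1) (h2 : W * U = 1) :
    (U * M * W).charpoly = M.charpoly := by
  unfold Matrix.charpoly
  have key : charmatrix (U * M * W)
      = (U.map C) * charmatrix M * (W.map C) := by
    have hC : ∀ (A B : Matrix V V ℝ), (A * B).map (C : ℝ →+* ℝ[X]).toFun
        = A.map C * B.map C := by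
      intro A B
      exact Matrix.map_mul (f := (C : ℝ →+* ℝ[X]))
    unfold charmatrix
    rw [Matrix.mul_sub, Matrix.sub_mul]
    congr 1
    · rw [← (Matrix.scalar_commute (X : ℝ[X]) (Commute.all X) (U.map C)).eq, Matrix.mul_assoc,
        ← Matrix.map_mul, h1, Matrix.map_one _ (map_zero C) (map_one C), Matrix.mul_one]
    · simp only [RingHom.mapMatrix_apply]
      rw [← Matrix.map_mul, ← Matrix.map_mul]
  rw [key, Matrix.det_mul, Matrix.det_mul]
  have : U.map (C : ℝ →+* ℝ[X]) * W.map C = 1 := by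
    rw [← Matrix.map_mul, h1, Matrix.map_one _ (map_zero C) (map_one C)]
  have hd : (U.map (C : ℝ →+* ℝ[X])).det * (W.map C).det = 1 := by
    rw [← Matrix.det_mul, this, Matrix.det_one]
  calc (U.map (C : ℝ →+* ℝ[X])).det * (charmatrix M).det * (W.map C).det
      = (charmatrix M).det * ((U.map (C : ℝ →+* ℝ[X])).det * (W.map C).det) := by ring
    _ = (charmatrix M).det := by rw [hd, mul_one]

lemma charpoly_diagonal (d : V → ℝ) :
    (Matrix.diagonal d).charpoly = ∏ i, (X - C (d i)) := by
  unfold Matrix.charpoly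
  have : charmatrix (Matrix.diagonal d) = Matrix.diagonal (fun i => (X : ℝ[X]) - C (d i)) := by
    ext i j
    by_cases h : i = j
    · subst h; simp [Matrix.charmatrix_apply, Matrix.diagonal_apply]
    · simp [Matrix.charmatrix_apply, Matrix.diagonal_apply, h]
  rw [this, Matrix.det_diagonal]

lemma roots_charpoly_hermitian (M : Matrix V V ℝ) (hM : M.IsHermitian) :
    M.charpoly.roots = Finset.univ.val.map hM.eigenvalues := by
  have hs := hM.spectral_theorem
  have hU1 : (hM.eigenvectorUnitary : Matrix V V ℝ) * (star hM.eigenvectorUnitary : Matrix V V ℝ) = 1 :=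
    Matrix.mem_unitaryGroup_iff.mp hM.eigenvectorUnitary.2
  have hU2 : (star hM.eigenvectorUnitary : Matrix V V ℝ) * (hM.eigenvectorUnitary : Matrix V V ℝ) = 1 :=
    Matrix.mem_unitaryGroup_iff'.mp hM.eigenvectorUnitary.2
  have hdiag : (RCLike.ofReal ∘ hM.eigenvalues : V → ℝ) = hM.eigenvalues := by
    funext i; simp [RCLike.ofReal_real_eq_id]
  rw [show M.charpoly = (Matrix.diagonal hM.eigenvalues).charpoly by
      conv_lhs => rw [hs]
      rw [hdiag] at hs ⊢
      exact charpoly_conj _ _ _ hU1 hU2]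
  rw [_root_.charpoly_diagonal]
  have : ∏ i, ((X : ℝ[X]) - C (hM.eigenvalues i))
      = ((Finset.univ.val.map hM.eigenvalues).map (fun a => (X : ℝ[X]) - C a)).prod := by
    rw [Multiset.map_map]
    rfl
  rw [this, Polynomial.roots_multiset_prod_X_sub_C]
end Gen3

/-- The power graph of a group: distinct `x, y` are adjacent iff one is an
integral power of the other. -/
def powerGraph (G : Type*) [Group G] : SimpleGraph G where
  Adj x y := x ≠ y ∧ (x ∈ Subgroup.zpowers y ∨ y ∈ Subgroup.zpowers x)
  symm := ⟨fun _ _ h => ⟨h.1.symm, h.2.symm⟩⟩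
  loopless := ⟨fun _ h => h.1 rfl⟩


section Dihedral
variable {m : ℕ}

lemma sr_zpow (i : ZMod m) (k : ℤ) : (sr i : DihedralGroup m)^k = 1 ∨ (sr i)^k = sr i := by
  have h2 : (sr i : DihedralGroup m)^(2:ℤ) = 1 := by
    rw [show (2:ℤ) = ((2:ℕ):ℤ) by norm_num, zpow_natCast, sq, sr_mul_self]
  rcases Int.even_or_odd k with ⟨c, hc⟩ | ⟨c, hc⟩
  · left
    rw [hc, show c + c = 2 * c by ring, _root_.zpow_mul, h2, _root_.one_zpow]
  · right
    rw [hc, _root_.zpow_add, show 2 * c = c * 2 by ring, _root_.zpow_mul, zpow_one,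
      show ((sr i : DihedralGroup m)^(c:ℤ))^(2:ℤ) = ((sr i)^(2:ℤ))^(c:ℤ) by
        rw [← _root_.zpow_mul, ← _root_.zpow_mul, mul_comm], h2, _root_.one_zpow, one_mul]

lemma mem_zpowers_sr {i : ZMod m} {x : DihedralGroup m} :
    x ∈ Subgroup.zpowers (sr i) ↔ x = 1 ∨ x = sr i := by
  constructor
  · rintro ⟨k, rfl⟩
    exact (sr_zpow i k).imp (fun h => h) (fun h => h)
  · rintro (rfl | rfl)
    · exact Subgroup.one_mem _
    · exact Subgroup.mem_zpowers _

lemma r_zpow (j : ZMod m) (k : ℤ) : ∃ c, (r j : DihedralGroup m)^k = r c := by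
  have hn : ∀ n : ℕ, ∃ c, (r j : DihedralGroup m)^n = r c := by
    intro n
    induction n with
    | zero => exact ⟨0, rfl⟩
    | succ n ih =>
      obtain ⟨c, hc⟩ := ih
      exact ⟨c + j, by rw [pow_succ, hc, r_mul_r]⟩
  rcases k.eq_nat_or_neg with ⟨n, rfl | rfl⟩
  · obtain ⟨c, hc⟩ := hn n
    exact ⟨c, by rw [zpow_natCast, hc]⟩
  · obtain ⟨c, hc⟩ := hn n
    refine ⟨-c, ?_⟩
    rw [_root_.zpow_neg, zpow_natCast, hc]
    exact inv_eq_of_mul_eq_one_right (by rw [r_mul_r, add_neg_cancel]; rfl)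

lemma sr_not_mem_zpowers_r (i j : ZMod m) : (sr i : DihedralGroup m) ∉ Subgroup.zpowers (r j) := by
  rintro ⟨k, hk⟩
  obtain ⟨c, hc⟩ := _root_.r_zpow j k
  have hk' : (r j : DihedralGroup m)^k = sr i := hk
  rw [hc] at hk'
  exact absurd hk' (by simp)

lemma adj_sr_iff {i : ZMod m} {x : DihedralGroup m} :
    (powerGraph (DihedralGroup m)).Adj (sr i) x ↔ x = 1 := by
  constructor
  · rintro ⟨hne, h | h⟩
    · rcases x with j | j
      · exact absurd h (sr_not_mem_zpowers_r i j)
      · rcases mem_zpowers_sr.mp h with h1 | h1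
        · exact absurd h1 (by simp [DihedralGroup.one_def, -DihedralGroup.r_zero])
        · exact absurd h1 hne
    · rcases mem_zpowers_sr.mp h with h1 | h1
      · exact h1
      · exact absurd h1.symm hne
  · rintro rfl
    refine ⟨by simp [DihedralGroup.one_def, -DihedralGroup.r_zero], Or.inr (Subgroup.one_mem _)⟩

lemma adj_one {x : DihedralGroup m} (hx : x ≠ 1) : (powerGraph (DihedralGroup m)).Adj 1 x :=
  ⟨fun h => hx h.symm, Or.inl (Subgroup.one_mem _)⟩
end Dihedral

section DihedralLap
open SimpleGraph
variable {m : ℕ} [NeZero m] [DecidableEq (DihedralGroup m)]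
  [DecidableRel (powerGraph (DihedralGroup m)).Adj]

lemma neighborFinset_sr (i : ZMod m) :
    (powerGraph (DihedralGroup m)).neighborFinset (sr i) = {1} := by
  ext y
  simp [SimpleGraph.mem_neighborFinset, adj_sr_iff]

lemma neighborFinset_one :
    (powerGraph (DihedralGroup m)).neighborFinset 1 = Finset.univ.erase 1 := by
  ext y
  simp only [SimpleGraph.mem_neighborFinset, Finset.mem_erase, Finset.mem_univ, and_true]
  constructor
  · exact fun h => fun hy => h.1 hy.symm
  · exact fun h => adj_one h
end DihedralLap

section DihedralEigen
open SimpleGraph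
variable {m : ℕ} [NeZero m] [DecidableEq (DihedralGroup m)]
  [DecidableRel (powerGraph (DihedralGroup m)).Adj]

lemma eigenvec_one (hm : (1 : ZMod m) ≠ 0) :
    (powerGraph (DihedralGroup m)).lapMatrix ℝ *ᵥ
        (fun x => if x = sr 0 then (1:ℝ) else if x = sr 1 then -1 else 0)
      = (1:ℝ) • (fun x => if x = sr 0 then (1:ℝ) else if x = sr 1 then -1 else 0) := by
  set v : DihedralGroup m → ℝ :=
    fun x => if x = sr 0 then (1:ℝ) else if x = sr 1 then -1 else 0 with hvdef
  have hv1 : v 1 = 0 := by simp [hvdef, DihedralGroup.one_def, -DihedralGroup.r_zero]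
  have hsum : ∑ x, v x = 0 := by
    have hne : (sr 0 : DihedralGroup m) ≠ sr 1 := by
      simp only [ne_eq, DihedralGroup.sr.injEq]
      exact fun h => hm h.symm
    have hsplit : ∀ x : DihedralGroup m,
        v x = (if x = sr 0 then (1:ℝ) else 0) + (if x = sr 1 then (-1:ℝ) else 0) := by
      intro x
      by_cases h0 : x = sr 0
      · subst h0; simp [hvdef, hne]
      · by_cases h1 : x = sr 1
        · subst h1; simp [hvdef, Ne.symm hne, hne]
        · simp [hvdef, h0, h1]
    simp_rw [hsplit]
    rw [Finset.sum_add_distrib, Finset.sum_ite_eq' Finset.univ (sr 0) (fun _ => (1:ℝ)),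
      Finset.sum_ite_eq' Finset.univ (sr 1) (fun _ => (-1:ℝ))]
    simp
  funext x
  rcases x with j | j
  · by_cases hj : j = 0
    · subst hj
      rw [show (r 0 : DihedralGroup m) = 1 from rfl, lap_mulVec, neighborFinset_one]
      have : ∑ y ∈ Finset.univ.erase (1 : DihedralGroup m), (v 1 - v y)
          = ∑ y ∈ Finset.univ.erase (1 : DihedralGroup m), (0 - v y) := by
        refine Finset.sum_congr rfl fun y _ => by rw [hv1]
      rw [this]
      simp only [zero_sub, Finset.sum_neg_distrib]
      rw [Finset.sum_erase_eq_sub (Finset.mem_univ _), hsum, hv1]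
      simp [hv1]
    · rw [lap_mulVec]
      have hrj1 : (r j : DihedralGroup m) ≠ 1 := by
        simp only [DihedralGroup.one_def, ne_eq, DihedralGroup.r.injEq]
        exact hj
      have hvrj : v (r j) = 0 := by simp [hvdef]
      rw [Finset.sum_eq_zero, Pi.smul_apply, hvrj, smul_eq_mul, mul_zero]
      intro y hy
      rw [SimpleGraph.mem_neighborFinset] at hy
      rcases y with i | i
      · simp [hvdef]
      · exact absurd (adj_sr_iff.mp hy.symm) hrj1
  · rw [lap_mulVec, neighborFinset_sr, Finset.sum_singleton, hv1, sub_zero,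
      Pi.smul_apply, smul_eq_mul, one_mul]

lemma eigenvec_top :
    (powerGraph (DihedralGroup m)).lapMatrix ℝ *ᵥ
        (fun x => if x = 1 then ((Fintype.card (DihedralGroup m)):ℝ) - 1 else -1)
      = ((Fintype.card (DihedralGroup m)):ℝ) •
        (fun x => if x = 1 then ((Fintype.card (DihedralGroup m)):ℝ) - 1 else -1) := by
  set N : ℝ := ((Fintype.card (DihedralGroup m)):ℝ) with hN
  set w : DihedralGroup m → ℝ := fun x => if x = 1 then N - 1 else -1 with hwdef
  have hcardpos : 1 ≤ Fintype.card (DihedralGroup m) := Fintype.card_pos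
  funext x
  by_cases hx : x = 1
  · subst hx
    rw [lap_mulVec, neighborFinset_one]
    have : ∑ y ∈ Finset.univ.erase (1 : DihedralGroup m), (w 1 - w y)
        = ∑ _y ∈ Finset.univ.erase (1 : DihedralGroup m), N := by
      refine Finset.sum_congr rfl fun y hy => ?_
      rw [Finset.mem_erase] at hy
      simp only [hwdef, if_pos rfl, if_neg hy.1]
      ring
    rw [this, Finset.sum_const, Finset.card_erase_of_mem (Finset.mem_univ _), Finset.card_univ,
      nsmul_eq_mul, Nat.cast_sub hcardpos, Pi.smul_apply, smul_eq_mul]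
    simp only [hwdef, if_pos rfl]
    push_cast
    ring
  · rw [lap_mulVec]
    have : ∑ y ∈ (powerGraph (DihedralGroup m)).neighborFinset x, (w x - w y)
        = ∑ y ∈ (powerGraph (DihedralGroup m)).neighborFinset x,
            (if y = 1 then -N else 0) := by
      refine Finset.sum_congr rfl fun y hy => ?_
      rw [SimpleGraph.mem_neighborFinset] at hy
      by_cases hy1 : y = 1
      · subst hy1
        simp only [hwdef, if_neg hx]
        norm_num
        ring
      · simp only [hwdef, if_neg hx, if_neg hy1]
        ring
    rw [this, Finset.sum_ite_eq' _ (1 : DihedralGroup m) (fun _ => -N)]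
    have h1mem : (1 : DihedralGroup m) ∈ (powerGraph (DihedralGroup m)).neighborFinset x := by
      rw [SimpleGraph.mem_neighborFinset]
      exact (adj_one hx).symm
    rw [if_pos h1mem, Pi.smul_apply, smul_eq_mul]
    simp only [hwdef, if_neg hx]
    ring

set_option maxHeartbeats 1000000 in
lemma const_of_eigen_top {v : DihedralGroup m → ℝ}
    (hv : (powerGraph (DihedralGroup m)).lapMatrix ℝ *ᵥ v
      = ((Fintype.card (DihedralGroup m)):ℝ) • v) :
    ∀ x, x ≠ 1 → v x = v (sr 0) := by
  set N : ℝ := ((Fintype.card (DihedralGroup m)):ℝ) with hN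
  have hN0 : N ≠ 0 := Nat.cast_ne_zero.mpr Fintype.card_ne_zero
  have h0 : ∑ x, v x = 0 := eigen_sum_zero (powerGraph (DihedralGroup m)) hv hN0
  have hquad : v ⬝ᵥ ((powerGraph (DihedralGroup m)).lapMatrix ℝ *ᵥ v) = N * (v ⬝ᵥ v) := by
    rw [hv, dotProduct_smul, smul_eq_mul]
  have hnn : ∀ i j : DihedralGroup m,
      0 ≤ (v i - v j)^2 - (if (powerGraph (DihedralGroup m)).Adj i j then (v i - v j)^2 else 0) := by
    intro i j
    split
    · simp
    · rw [sub_zero]; positivity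
  have hkey : ∑ i, ∑ j, ((v i - v j)^2
      - (if (powerGraph (DihedralGroup m)).Adj i j then (v i - v j)^2 else 0)) = 0 := by
    have e1 : ∑ i, ∑ j, ((v i - v j)^2
        - (if (powerGraph (DihedralGroup m)).Adj i j then (v i - v j)^2 else 0))
        = (∑ i, ∑ j, (v i - v j)^2)
          - ∑ i, ∑ j, (if (powerGraph (DihedralGroup m)).Adj i j then (v i - v j)^2 else 0) := by
      rw [← Finset.sum_sub_distrib]
      exact Finset.sum_congr rfl fun i _ => by rw [← Finset.sum_sub_distrib]
    rw [e1, sq_sum_identity v h0]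
    have e2 : ∑ i, ∑ j, (if (powerGraph (DihedralGroup m)).Adj i j then (v i - v j)^2 else 0)
        = 2 * (N * (v ⬝ᵥ v)) := by
      have hqe := quad_eq (powerGraph (DihedralGroup m)) v
      rw [hquad] at hqe
      field_simp at hqe
      linarith [hqe]
    rw [e2, hN]
    ring
  have hz : ∀ x y, ¬ (powerGraph (DihedralGroup m)).Adj x y → v x = v y := by
    intro x y hxy
    have houter := (Finset.sum_eq_zero_iff_of_nonneg
      (fun i _ => Finset.sum_nonneg (fun j _ => hnn i j))).mp hkey x (Finset.mem_univ x)
    have hinner := (Finset.sum_eq_zero_iff_of_nonneg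
      (fun j _ => hnn x j)).mp houter y (Finset.mem_univ y)
    rw [if_neg hxy, sub_zero] at hinner
    exact sub_eq_zero.mp (pow_eq_zero_iff (by norm_num) |>.mp hinner)
  intro x hx
  refine hz x (sr 0) fun hadj => hx (adj_sr_iff.mp hadj.symm)
end DihedralEigen

open scoped Classical in
/-- The algebraic connectivity of the power graph of `D_{2pq}` is `1`, and the largest
Laplacian eigenvalue is `2pq`, which is a simple eigenvalue. -/
theorem algebraic_connectivity_dihedral (p q : ℕ) (hp : p.Prime) (hq : q.Prime)
    (hpq : p ≠ q) [NeZero (p * q)] :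
    (1 : ℝ) ∈ ((powerGraph (DihedralGroup (p * q))).lapMatrix ℝ).charpoly.roots ∧
    (∀ μ ∈ ((powerGraph (DihedralGroup (p * q))).lapMatrix ℝ).charpoly.roots,
      μ ≠ 0 → (1 : ℝ) ≤ μ) ∧
    (∀ μ ∈ ((powerGraph (DihedralGroup (p * q))).lapMatrix ℝ).charpoly.roots,
      μ ≤ 2 * (p : ℝ) * q) ∧
    ((powerGraph (DihedralGroup (p * q))).lapMatrix ℝ).charpoly.roots.count
        (2 * (p : ℝ) * q) = 1 := by
  have hpq2 : 1 < p * q := lt_of_lt_of_le hp.one_lt (Nat.le_mul_of_pos_right p hq.pos)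
  haveI : Fact (1 < p * q) := ⟨hpq2⟩
  have h1m : (1 : ZMod (p * q)) ≠ 0 := one_ne_zero
  have hcard : ((Fintype.card (DihedralGroup (p * q))) : ℝ) = 2 * (p : ℝ) * q := by
    rw [DihedralGroup.card]; push_cast; ring
  have hp2 : (2:ℝ) ≤ (p:ℝ) := by exact_mod_cast hp.two_le
  have hq2 : (2:ℝ) ≤ (q:ℝ) := by exact_mod_cast hq.two_le
  have hN1 : (1:ℝ) < 2 * (p:ℝ) * q := by nlinarith
  have hNpos : (0:ℝ) < 2 * (p:ℝ) * q := by nlinarith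
  have hu : ∀ x : DihedralGroup (p * q), x ≠ 1 → (powerGraph (DihedralGroup (p * q))).Adj 1 x :=
    fun _ hx => adj_one hx
  have hdotpos : ∀ v : DihedralGroup (p * q) → ℝ, v ≠ 0 → 0 < v ⬝ᵥ v := by
    intro v hv
    have h1 : v ⬝ᵥ v ≠ 0 := fun hc => hv (dotProduct_self_eq_zero.mp hc)
    have h2 : 0 ≤ v ⬝ᵥ v := Finset.sum_nonneg fun i _ => mul_self_nonneg _
    exact h2.lt_of_ne (Ne.symm h1)
  refine ⟨?_, ?_, ?_, ?_⟩
  · refine (root_iff_eigen _ 1).mpr ⟨_, ?_, eigenvec_one h1m⟩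
    intro hc
    have h2 := congrFun hc (sr 0)
    simp at h2
  · intro μ hμ hμ0
    obtain ⟨v, hv0, hveig⟩ := (root_iff_eigen _ μ).mp hμ
    have h0 := eigen_sum_zero _ hveig hμ0
    have hge := quad_ge (powerGraph (DihedralGroup (p * q))) hu v h0
    have hdot : v ⬝ᵥ ((powerGraph (DihedralGroup (p * q))).lapMatrix ℝ *ᵥ v) = μ * (v ⬝ᵥ v) := by
      rw [hveig, dotProduct_smul, smul_eq_mul]
    have hpos := hdotpos v hv0
    nlinarith
  · intro μ hμ
    by_cases hμ0 : μ = 0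
    · subst hμ0; linarith
    obtain ⟨v, hv0, hveig⟩ := (root_iff_eigen _ μ).mp hμ
    have h0 := eigen_sum_zero _ hveig hμ0
    have hle := quad_le (powerGraph (DihedralGroup (p * q))) v h0
    have hdot : v ⬝ᵥ ((powerGraph (DihedralGroup (p * q))).lapMatrix ℝ *ᵥ v) = μ * (v ⬝ᵥ v) := by
      rw [hveig, dotProduct_smul, smul_eq_mul]
    have hpos := hdotpos v hv0
    rw [hdot, hcard] at hle
    nlinarith
  · have hherm : ((powerGraph (DihedralGroup (p * q))).lapMatrix ℝ).IsHermitian :=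
      (SimpleGraph.posSemidef_lapMatrix ℝ _).1
    have hroots := roots_charpoly_hermitian _ hherm
    set C : ℝ := ((Fintype.card (DihedralGroup (p * q))) : ℝ) with hC
    have hC1 : (1:ℝ) < C := by rw [hcard]; exact hN1
    have hC0 : C ≠ 0 := by intro h; rw [h] at hC1; linarith
    have hcard1 : 1 ≤ Fintype.card (DihedralGroup (p * q)) := Fintype.card_pos
    have htop := eigenvec_top (m := p * q)
    have hwne : (fun x : DihedralGroup (p * q) => if x = 1 then C - 1 else (-1:ℝ)) ≠ 0 := by
      intro hc
      have h2 := congrFun hc 1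
      rw [if_pos rfl] at h2
      have h3 : C - 1 = 0 := h2
      linarith
    have hmemC : C ∈ ((powerGraph (DihedralGroup (p * q))).lapMatrix ℝ).charpoly.roots :=
      (root_iff_eigen _ C).mpr ⟨_, hwne, htop⟩
    rw [hroots] at hmemC
    obtain ⟨i₀, -, hi₀⟩ := Multiset.mem_map.mp hmemC
    -- helper : sum splitting
    have hsum_split : ∀ u : DihedralGroup (p * q) → ℝ, (∀ x, x ≠ 1 → u x = u (sr 0)) →
        ∑ x, u x = u 1 + (C - 1) * u (sr 0) := by
      intro u hu'
      rw [← Finset.add_sum_erase _ u (Finset.mem_univ 1)]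
      congr 1
      rw [Finset.sum_congr rfl (fun x hx => hu' x (Finset.mem_erase.mp hx).1),
        Finset.sum_const, Finset.card_erase_of_mem (Finset.mem_univ _), Finset.card_univ,
        nsmul_eq_mul, Nat.cast_sub hcard1]
      norm_num
      exact Or.inl rfl
    have hprod_split : ∀ u t : DihedralGroup (p * q) → ℝ,
        (∀ x, x ≠ 1 → u x = u (sr 0)) → (∀ x, x ≠ 1 → t x = t (sr 0)) →
        ∑ x, u x * t x = u 1 * t 1 + (C - 1) * (u (sr 0) * t (sr 0)) := by
      intro u t hu' ht'
      rw [← Finset.add_sum_erase _ (fun x => u x * t x) (Finset.mem_univ 1)]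
      congr 1
      rw [Finset.sum_congr rfl (fun x hx => by
          rw [hu' x (Finset.mem_erase.mp hx).1, ht' x (Finset.mem_erase.mp hx).1]),
        Finset.sum_const, Finset.card_erase_of_mem (Finset.mem_univ _), Finset.card_univ,
        nsmul_eq_mul, Nat.cast_sub hcard1]
      norm_num
      exact Or.inl rfl
    have hinner : ∀ k l, ⟪hherm.eigenvectorBasis k, hherm.eigenvectorBasis l⟫
        = ∑ x, (hherm.eigenvectorBasis k) x * (hherm.eigenvectorBasis l) x := by
      intro k l
      simp [PiLp.inner_apply, RCLike.inner_apply, conj_trivial]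
      exact Finset.sum_congr rfl fun x _ => mul_comm _ _
    -- structure of eigenvectors for eigenvalue C
    have key : ∀ k, hherm.eigenvalues k = C →
        (∀ x, x ≠ 1 → (hherm.eigenvectorBasis k) x = (hherm.eigenvectorBasis k) (sr 0)) ∧
        (hherm.eigenvectorBasis k) 1 = -(C - 1) * (hherm.eigenvectorBasis k) (sr 0) ∧
        (hherm.eigenvectorBasis k) (sr 0) ≠ 0 := by
      intro k hk
      set vk : DihedralGroup (p * q) → ℝ := fun x => hherm.eigenvectorBasis k x with hvk
      have hek : (powerGraph (DihedralGroup (p * q))).lapMatrix ℝ *ᵥ vk = C • vk := by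
        have h3 := hherm.mulVec_eigenvectorBasis k
        rw [hk] at h3
        exact h3
      have hconst : ∀ x, x ≠ 1 → vk x = vk (sr 0) := const_of_eigen_top hek
      have hsum0 : ∑ x, vk x = 0 := eigen_sum_zero (powerGraph (DihedralGroup (p * q))) hek hC0
      rw [hsum_split vk hconst] at hsum0
      have ha : vk 1 = -(C - 1) * vk (sr 0) := by linarith
      have hne : vk (sr 0) ≠ 0 := by
        intro hc
        have hzero : ∀ x, vk x = 0 := by
          intro x
          by_cases hx : x = 1
          · subst hx; rw [ha, hc]; ring
          · rw [hconst x hx, hc]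
        have hnorm := orthonormal_iff_ite.mp hherm.eigenvectorBasis.orthonormal k k
        rw [if_pos rfl, hinner k k] at hnorm
        have hnorm' : ∑ x, vk x * vk x = 1 := hnorm
        have hzsum : ∑ x, vk x * vk x = 0 :=
          Finset.sum_eq_zero fun x _ => by rw [hzero x]; ring
        rw [hzsum] at hnorm'
        exact one_ne_zero hnorm'.symm
      exact ⟨hconst, ha, hne⟩
    have huniq : ∀ k l, hherm.eigenvalues k = C → hherm.eigenvalues l = C → k = l := by
      intro k l hk hl
      by_contra hkl
      obtain ⟨hconstk, hak, hck⟩ := key k hk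
      obtain ⟨hconstl, hal, hcl⟩ := key l hl
      set vk : DihedralGroup (p * q) → ℝ := fun x => hherm.eigenvectorBasis k x with hvk
      set vl : DihedralGroup (p * q) → ℝ := fun x => hherm.eigenvectorBasis l x with hvl
      have horth : ∑ x, vk x * vl x = 0 := by
        have h := orthonormal_iff_ite.mp hherm.eigenvectorBasis.orthonormal k l
        rw [if_neg hkl, hinner k l] at h
        exact h
      have hconstk' : ∀ x, x ≠ 1 → vk x = vk (sr 0) := hconstk
      have hconstl' : ∀ x, x ≠ 1 → vl x = vl (sr 0) := hconstl
      rw [hprod_split vk vl hconstk' hconstl'] at horth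
      have hak' : vk 1 = -(C - 1) * vk (sr 0) := hak
      have hal' : vl 1 = -(C - 1) * vl (sr 0) := hal
      rw [hak', hal'] at horth
      have hfact : -(C - 1) * vk (sr 0) * (-(C - 1) * vl (sr 0))
          + (C - 1) * (vk (sr 0) * vl (sr 0))
          = (C - 1) * C * (vk (sr 0) * vl (sr 0)) := by ring
      rw [hfact] at horth
      exact mul_ne_zero (mul_ne_zero (sub_ne_zero.mpr (ne_of_gt hC1)) hC0)
        (mul_ne_zero hck hcl) horth
    -- conclude
    rw [hroots]
    rw [← hcard, Multiset.count_map, ← Finset.filter_val]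
    have hfilter : Finset.univ.filter (fun a => C = hherm.eigenvalues a) = {i₀} := by
      ext k
      simp only [Finset.mem_filter, Finset.mem_univ, true_and, Finset.mem_singleton]
      constructor
      · intro hkk
        exact huniq k i₀ hkk.symm hi₀
      · rintro rfl
        exact hi₀.symm
    rw [hfilter]
    rfl
end

section
/- Let p and q be distinct primes. The number of edges of the power graph of D_{2pq} equals (1/2)[(2pq - 1) + (p-1)(q-1)(pq - 1) + (q-1)(pq - p) + (p-1)(pq - q) + pq]. -/
open Polynomial

/- The number of edges of the power graph of `D_{2pq}`:
`2 · |E| = (2pq - 1) + (p-1)(q-1)(pq - 1) + (q-1)(pq - p) + (p-1)(pq - q) + pq`. -/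

open DihedralGroup Finset

variable {n : ℕ}

lemma r_inv (i : ZMod n) : (r i)⁻¹ = r (-i) := by
  apply inv_eq_of_mul_eq_one_right
  rw [r_mul_r, add_neg_cancel, one_def]

lemma r_pow (i : ZMod n) (k : ℕ) : (r i) ^ k = r (k • i) := by
  induction k with
  | zero => rw [pow_zero, zero_smul, one_def]
  | succ m ih => rw [pow_succ, ih, r_mul_r, succ_nsmul]

lemma r_zpow_s16 (i : ZMod n) (k : ℤ) : (r i) ^ k = r (k • i) := by
  cases k with
  | ofNat m => simpa using _root_.r_pow i m
  | negSucc m =>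
      rw [zpow_negSucc, _root_.r_pow, r_inv]
      congr 1
      rw [Int.negSucc_eq, neg_smul]
      congr 1
      push_cast [← natCast_zsmul]
      ring

lemma mem_zpowers_r_iff {x : DihedralGroup n} {i : ZMod n} :
    x ∈ Subgroup.zpowers (r i) ↔ ∃ j ∈ AddSubgroup.zmultiples i, x = r j := by
  rw [Subgroup.mem_zpowers_iff]
  constructor
  · rintro ⟨k, rfl⟩
    exact ⟨k • i, AddSubgroup.zsmul_mem_zmultiples i k, (r_zpow_s16 i k)⟩
  · rintro ⟨j, hj, rfl⟩
    obtain ⟨k, rfl⟩ := AddSubgroup.mem_zmultiples_iff.mp hj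
    exact ⟨k, (r_zpow_s16 i k)⟩

lemma mem_zpowers_sr_iff {x : DihedralGroup n} {i : ZMod n} :
    x ∈ Subgroup.zpowers (sr i) ↔ x = 1 ∨ x = sr i := by
  constructor
  · rintro ⟨k, rfl⟩
    show sr i ^ k = 1 ∨ sr i ^ k = sr i
    have h2 : (sr i : DihedralGroup n) ^ (2:ℤ) = 1 := by
      rw [zpow_two, sr_mul_self]
    rcases Int.even_or_odd k with ⟨m, hm⟩ | ⟨m, hm⟩
    · left
      rw [hm, ← two_mul, zpow_mul, h2, one_zpow]
    · right
      rw [hm, zpow_add, zpow_mul, h2, one_zpow, one_mul, zpow_one]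
  · rintro (rfl | rfl)
    · exact Subgroup.one_mem _
    · exact Subgroup.mem_zpowers _

lemma mem_zmultiples_zmod_iff [NeZero n] {i j : ZMod n} :
    i ∈ AddSubgroup.zmultiples j ↔ j.val.gcd n ∣ i.val := by
  have h2 : ((i.val : ℤ) : ZMod n) = i := by
    exact_mod_cast ZMod.natCast_rightInverse i
  have h3 : ((j.val : ℤ) : ZMod n) = j := by
    exact_mod_cast ZMod.natCast_rightInverse j
  constructor
  · intro h
    obtain ⟨k, hk⟩ := AddSubgroup.mem_zmultiples_iff.mp h
    have h1 : ((k * j.val : ℤ) : ZMod n) = ((i.val : ℤ) : ZMod n) := by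
      rw [h2, ← hk, zsmul_eq_mul, Int.cast_mul, h3]
    rw [ZMod.intCast_eq_intCast_iff] at h1
    obtain ⟨t, ht⟩ := (Int.modEq_iff_dvd.mp h1)
    have hd : (↑(j.val.gcd n) : ℤ) ∣ (i.val : ℤ) := by
      have : (i.val : ℤ) = k * j.val + n * t := by linarith
      rw [this]
      exact dvd_add
        (Dvd.dvd.mul_left (Int.natCast_dvd_natCast.mpr (Nat.gcd_dvd_left _ _)) k)
        (Dvd.dvd.mul_right (Int.natCast_dvd_natCast.mpr (Nat.gcd_dvd_right _ _)) t)
    exact_mod_cast hd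
  · rintro ⟨m, hm⟩
    refine AddSubgroup.mem_zmultiples_iff.mpr ⟨Nat.gcdA j.val n * m, ?_⟩
    have key : ((Nat.gcdA j.val n * m * j.val : ℤ) : ZMod n) = ((i.val : ℤ) : ZMod n) := by
      rw [ZMod.intCast_eq_intCast_iff]
      have hb := Nat.gcd_eq_gcd_ab j.val n
      refine (Int.modEq_iff_dvd.mpr ⟨-(Nat.gcdB j.val n * m), ?_⟩).symm
      have : (i.val : ℤ) = (j.val.gcd n : ℤ) * m := by exact_mod_cast hm
      rw [this, hb]
      ring
    rw [zsmul_eq_mul]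
    calc ((Nat.gcdA j.val n * m : ℤ) : ZMod n) * j
        = ((Nat.gcdA j.val n * m * j.val : ℤ) : ZMod n) := by
          conv_rhs => rw [Int.cast_mul]
          rw [h3]
      _ = i := by rw [key, h2]

section counting
open Finset

lemma dvd_pq {p q d : ℕ} (hp : p.Prime) (hq : q.Prime) (hd : d ∣ p * q) :
    d = 1 ∨ d = p ∨ d = q ∨ d = p * q := by
  rcases (Nat.coprime_or_dvd_of_prime hp d).symm with h | h
  · -- p ∣ d
    obtain ⟨e, rfl⟩ := h
    have he : e ∣ q := (mul_dvd_mul_iff_left hp.pos.ne').mp hd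
    rcases (Nat.Prime.eq_one_or_self_of_dvd hq e he) with rfl | rfl
    · right; left; simp
    · right; right; right; rfl
  · have : d ∣ q := (Nat.Coprime.dvd_of_dvd_mul_left (Nat.coprime_comm.mp h) hd)
    rcases (Nat.Prime.eq_one_or_self_of_dvd hq d this) with rfl | rfl
    · left; rfl
    · right; right; left; rfl

lemma gchar {p q : ℕ} (hp : p.Prime) (hq : q.Prime) (hpq : p ≠ q) {v : ℕ} :
    v.gcd (p * q) = p ↔ p ∣ v ∧ ¬ q ∣ v := by
  constructor
  · intro h
    refine ⟨h ▸ Nat.gcd_dvd_left v (p * q), fun hqv => ?_⟩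
    have : q ∣ v.gcd (p * q) := Nat.dvd_gcd hqv (dvd_mul_left q p)
    rw [h] at this
    exact hpq ((Nat.prime_dvd_prime_iff_eq hq hp).mp this).symm
  · rintro ⟨h1, h2⟩
    have hg : v.gcd (p * q) ∣ p * q := Nat.gcd_dvd_right v (p * q)
    have hpg : p ∣ v.gcd (p * q) := Nat.dvd_gcd h1 (dvd_mul_right p q)
    rcases dvd_pq hp hq hg with h | h | h | h
    · exact absurd (Nat.le_of_dvd one_pos (h ▸ hpg)) (by linarith [hp.two_le])
    · exact h
    · rw [h] at hpg
      exact absurd ((Nat.prime_dvd_prime_iff_eq hp hq).mp hpg) hpq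
    · exfalso
      apply h2
      calc q ∣ p * q := dvd_mul_left q p
        _ = v.gcd (p * q) := h.symm
        _ ∣ v := Nat.gcd_dvd_left v (p * q)

end counting

section counting2
open Finset

variable {p q : ℕ}

lemma val_eq_zero_of_gcd_eq {i : ZMod (p * q)} [NeZero (p * q)]
    (h : i.val.gcd (p * q) = p * q) : i.val = 0 := by
  have h1 : p * q ∣ i.val := by
    have h2 := Nat.gcd_dvd_left i.val (p * q)
    rwa [h] at h2
  exact Nat.eq_zero_of_dvd_of_lt h1 (ZMod.val_lt i)

lemma incomp_iff (hp : p.Prime) (hq : q.Prime) (hpq : p ≠ q) [NeZero (p * q)]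
    (i j : ZMod (p * q)) :
    ¬(j.val.gcd (p * q) ∣ i.val ∨ i.val.gcd (p * q) ∣ j.val) ↔
      (i.val.gcd (p * q) = p ∧ j.val.gcd (p * q) = q) ∨
      (i.val.gcd (p * q) = q ∧ j.val.gcd (p * q) = p) := by
  have hq' : ∀ {k : ZMod (p * q)}, k.val.gcd (p * q) = q ↔ q ∣ k.val ∧ ¬ p ∣ k.val := by
    intro k
    rw [show k.val.gcd (p * q) = k.val.gcd (q * p) from congrArg (Nat.gcd _) (mul_comm p q)]
    exact gchar hq hp hpq.symm
  constructor
  · intro h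
    push_neg at h
    obtain ⟨h1, h2⟩ := h
    have hgi := dvd_pq hp hq (Nat.gcd_dvd_right i.val (p * q))
    have hgj := dvd_pq hp hq (Nat.gcd_dvd_right j.val (p * q))
    rcases hgi with e | e | e | e
    · rw [e] at h2; exact absurd (one_dvd _) h2
    · rcases hgj with f | f | f | f
      · rw [f] at h1; exact absurd (one_dvd _) h1
      · exfalso
        apply h1
        have hgd := Nat.gcd_dvd_left i.val (p * q)
        rw [e] at hgd
        rw [f]
        exact hgd
      · exact Or.inl ⟨e, f⟩
      · rw [val_eq_zero_of_gcd_eq f] at h2; exact absurd (dvd_zero _) h2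
    · rcases hgj with f | f | f | f
      · rw [f] at h1; exact absurd (one_dvd _) h1
      · exact Or.inr ⟨e, f⟩
      · exfalso
        apply h1
        have hgd := Nat.gcd_dvd_left i.val (p * q)
        rw [e] at hgd
        rw [f]
        exact hgd
      · rw [val_eq_zero_of_gcd_eq f] at h2; exact absurd (dvd_zero _) h2
    · rw [val_eq_zero_of_gcd_eq e] at h1; exact absurd (dvd_zero _) h1
  · rintro (⟨hi, hj⟩ | ⟨hi, hj⟩) <;> push_neg <;> constructor
    · intro hdvd; rw [hj] at hdvd; exact ((gchar hp hq hpq).mp hi).2 hdvd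
    · intro hdvd; rw [hi] at hdvd; exact (hq'.mp hj).2 hdvd
    · intro hdvd; rw [hj] at hdvd; exact (hq'.mp hi).2 hdvd
    · intro hdvd; rw [hi] at hdvd; exact ((gchar hp hq hpq).mp hj).2 hdvd

end counting2

section counting3
open Finset

variable {p q : ℕ}

lemma card_range_dvd (hp0 : 0 < p) (m : ℕ) :
    ((range (p * m)).filter fun v => p ∣ v).card = m := by
  have himg : ((range (p * m)).filter fun v => p ∣ v) = (range m).image (· * p) := by
    ext v
    simp only [mem_filter, mem_range, mem_image]
    constructor
    · rintro ⟨hlt, t, rfl⟩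
      exact ⟨t, by rw [mul_comm p t, mul_comm p m] at hlt; exact lt_of_mul_lt_mul_right hlt (le_of_lt hp0), by ring⟩
    · rintro ⟨k, hk, rfl⟩
      exact ⟨by rw [mul_comm p m]; exact (Nat.mul_lt_mul_right hp0).mpr hk, k, by ring⟩
  rw [himg, card_image_of_injective _ (mul_left_injective₀ hp0.ne'), card_range]

lemma card_Sp (hp : p.Prime) (hq : q.Prime) (hpq : p ≠ q) [NeZero (p * q)] :
    (Finset.univ.filter fun i : ZMod (p * q) => i.val.gcd (p * q) = p).card = q - 1 := by
  have hco : Nat.Coprime p q := (Nat.coprime_primes hp hq).mpr hpq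
  have hcard1 : (Finset.univ.filter fun i : ZMod (p * q) => i.val.gcd (p * q) = p).card
      = ((range (p * q)).filter fun v => p ∣ v ∧ ¬ q ∣ v).card := by
    apply Finset.card_bij (fun a _ => a.val)
    · intro a ha
      simp only [mem_filter, mem_univ, true_and] at ha ⊢
      exact ⟨mem_range.mpr (ZMod.val_lt a), (gchar hp hq hpq).mp ha⟩
    · intro a _ b _ hab
      exact ZMod.val_injective _ hab
    · intro v hv
      simp only [mem_filter, mem_range] at hv
      refine ⟨(v : ZMod (p * q)), ?_, ZMod.val_cast_of_lt hv.1⟩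
      simp only [mem_filter, mem_univ, true_and]
      rw [ZMod.val_cast_of_lt hv.1]
      exact (gchar hp hq hpq).mpr hv.2
  rw [hcard1]
  have hsplit : ((range (p * q)).filter fun v => p ∣ v ∧ ¬ q ∣ v)
      = ((range (p * q)).filter fun v => p ∣ v) \ {0} := by
    ext v
    simp only [mem_filter, mem_sdiff, mem_range, mem_singleton]
    constructor
    · rintro ⟨hlt, hdvd, hnq⟩
      refine ⟨⟨hlt, hdvd⟩, fun h => hnq (h ▸ dvd_zero q)⟩
    · rintro ⟨⟨hlt, hdvd⟩, hne⟩
      refine ⟨hlt, hdvd, fun hqv => hne ?_⟩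
      exact Nat.eq_zero_of_dvd_of_lt (Nat.Coprime.mul_dvd_of_dvd_of_dvd hco hdvd hqv) hlt
  rw [hsplit, card_sdiff_of_subset, card_range_dvd hp.pos, card_singleton]
  intro v hv
  simp only [mem_singleton] at hv
  subst hv
  simp only [mem_filter, mem_range]
  exact ⟨Nat.pos_of_ne_zero (NeZero.ne _), dvd_zero p⟩

end counting3

section graph
open Finset DihedralGroup

variable {n : ℕ}

lemma powerGraph_adj {G : Type*} [Group G] {x y : G} :
    (powerGraph G).Adj x y ↔ x ≠ y ∧ (x ∈ Subgroup.zpowers y ∨ y ∈ Subgroup.zpowers x) :=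
  Iff.rfl

lemma r_mem_zpowers_r_iff {i j : ZMod n} :
    (r i : DihedralGroup n) ∈ Subgroup.zpowers (r j) ↔ i ∈ AddSubgroup.zmultiples j := by
  rw [mem_zpowers_r_iff]
  constructor
  · rintro ⟨a, ha, h⟩
    obtain rfl : i = a := by injection h
    exact ha
  · intro h
    exact ⟨i, h, rfl⟩

lemma adj_r_r [NeZero n] {i j : ZMod n} :
    (powerGraph (DihedralGroup n)).Adj (r i) (r j)
      ↔ i ≠ j ∧ (j.val.gcd n ∣ i.val ∨ i.val.gcd n ∣ j.val) := by
  rw [powerGraph_adj, r_mem_zpowers_r_iff, r_mem_zpowers_r_iff,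
    mem_zmultiples_zmod_iff, mem_zmultiples_zmod_iff]
  simp [DihedralGroup.r.injEq]

lemma adj_r_sr {i j : ZMod n} :
    (powerGraph (DihedralGroup n)).Adj (r i) (sr j) ↔ i = 0 := by
  rw [powerGraph_adj, mem_zpowers_sr_iff, mem_zpowers_r_iff]
  simp only [one_def, DihedralGroup.r.injEq]
  constructor
  · rintro ⟨-, (h | h) | ⟨a, -, h⟩⟩
    · exact h
    · exact absurd h (by simp)
    · exact absurd h (by simp)
  · intro h
    exact ⟨by simp, Or.inl (Or.inl h)⟩

lemma adj_sr_sr {i j : ZMod n} :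
    ¬ (powerGraph (DihedralGroup n)).Adj (sr i) (sr j) := by
  rintro ⟨hne, h | h⟩ <;> rw [mem_zpowers_sr_iff] at h <;>
    rcases h with h | h <;> simp [one_def, -r_zero] at h <;> exact hne (by rw [h])

lemma degree_split [NeZero n] [DecidableRel (powerGraph (DihedralGroup n)).Adj]
    (v : DihedralGroup n) :
    (powerGraph (DihedralGroup n)).degree v
      = (univ.filter fun j : ZMod n => (powerGraph (DihedralGroup n)).Adj v (r j)).card
        + (univ.filter fun j : ZMod n => (powerGraph (DihedralGroup n)).Adj v (sr j)).card := by
  rw [← SimpleGraph.card_neighborFinset_eq_degree, SimpleGraph.neighborFinset_eq_filter]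
  have : (univ.filter ((powerGraph (DihedralGroup n)).Adj v))
      = ((univ.filter fun j : ZMod n => (powerGraph (DihedralGroup n)).Adj v (r j)).image r)
        ∪ ((univ.filter fun j : ZMod n => (powerGraph (DihedralGroup n)).Adj v (sr j)).image sr) := by
    ext x
    cases x with
    | r a => simp [DihedralGroup.r.injEq]
    | sr a => simp [DihedralGroup.sr.injEq]
  rw [this, card_union_of_disjoint, card_image_of_injective, card_image_of_injective]
  · intro a b h; injection h
  · intro a b h; injection h
  · rw [Finset.disjoint_left]
    rintro x hx hy
    simp only [mem_image] at hx hy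
    obtain ⟨a, -, rfl⟩ := hx
    obtain ⟨b, -, h⟩ := hy
    exact absurd h (by simp)

end graph

section extra
open Finset

lemma gchar_q {p q : ℕ} (hp : p.Prime) (hq : q.Prime) (hpq : p ≠ q) {v : ℕ} :
    v.gcd (p * q) = q ↔ q ∣ v ∧ ¬ p ∣ v := by
  rw [show v.gcd (p * q) = v.gcd (q * p) from congrArg _ (mul_comm p q)]
  exact gchar hq hp hpq.symm

lemma card_Sq {p q : ℕ} (hp : p.Prime) (hq : q.Prime) (hpq : p ≠ q) [NeZero (p * q)] :
    (Finset.univ.filter fun i : ZMod (p * q) => i.val.gcd (p * q) = q).card = p - 1 := by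
  have hco : Nat.Coprime q p := (Nat.coprime_primes hq hp).mpr hpq.symm
  have hcard1 : (Finset.univ.filter fun i : ZMod (p * q) => i.val.gcd (p * q) = q).card
      = ((range (p * q)).filter fun v => q ∣ v ∧ ¬ p ∣ v).card := by
    apply Finset.card_bij (fun a _ => a.val)
    · intro a ha
      simp only [mem_filter, mem_univ, true_and] at ha ⊢
      exact ⟨mem_range.mpr (ZMod.val_lt a), (gchar_q hp hq hpq).mp ha⟩
    · intro a _ b _ hab
      exact ZMod.val_injective _ hab
    · intro v hv
      simp only [mem_filter, mem_range] at hv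
      refine ⟨(v : ZMod (p * q)), ?_, ZMod.val_cast_of_lt hv.1⟩
      simp only [mem_filter, mem_univ, true_and]
      rw [ZMod.val_cast_of_lt hv.1]
      exact (gchar_q hp hq hpq).mpr hv.2
  rw [hcard1]
  have hsplit : ((range (p * q)).filter fun v => q ∣ v ∧ ¬ p ∣ v)
      = ((range (p * q)).filter fun v => q ∣ v) \ {0} := by
    ext v
    simp only [mem_filter, mem_sdiff, mem_range, mem_singleton]
    constructor
    · rintro ⟨hlt, hdvd, hnp⟩
      refine ⟨⟨hlt, hdvd⟩, fun h => hnp (h ▸ dvd_zero p)⟩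
    · rintro ⟨⟨hlt, hdvd⟩, hne⟩
      refine ⟨hlt, hdvd, fun hpv => hne ?_⟩
      exact Nat.eq_zero_of_dvd_of_lt (Nat.Coprime.mul_dvd_of_dvd_of_dvd hco hdvd hpv)
        (by rw [mul_comm q p]; exact hlt)
  have hr : ((range (p * q)).filter fun v => q ∣ v).card = p := by
    rw [show p * q = q * p from mul_comm p q]
    exact card_range_dvd hq.pos p
  rw [hsplit, card_sdiff_of_subset, hr, card_singleton]
  intro v hv
  simp only [mem_singleton] at hv
  subst hv
  simp only [mem_filter, mem_range]
  exact ⟨Nat.pos_of_ne_zero (NeZero.ne _), dvd_zero q⟩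

end extra

open Finset DihedralGroup in
/-- The number of edges of the power graph of `D_{2pq}`:
`2 · |E| = (2pq - 1) + (p-1)(q-1)(pq - 1) + (q-1)(pq - p) + (p-1)(pq - q) + pq`. -/
theorem edge_count_dihedral (p q : ℕ) (hp : p.Prime) (hq : q.Prime) (hpq : p ≠ q) :
    2 * ((powerGraph (DihedralGroup (p * q))).edgeSet).ncard
      = (2 * p * q - 1) + (p - 1) * (q - 1) * (p * q - 1) + (q - 1) * (p * q - p)
        + (p - 1) * (p * q - q) + p * q := by
  classical
  haveI hn : NeZero (p * q) := ⟨Nat.mul_ne_zero hp.pos.ne' hq.pos.ne'⟩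
  set G := powerGraph (DihedralGroup (p * q)) with hG
  have h1 : (G.edgeSet).ncard = G.edgeFinset.card := by
    rw [← SimpleGraph.coe_edgeFinset, Set.ncard_coe_finset]
  rw [h1, ← SimpleGraph.sum_degrees_eq_twice_card_edges]
  -- split the sum over the two families
  have hbij : Function.Bijective (Sum.elim (r (n := p * q)) sr) := by
    constructor
    · rintro (a | a) (b | b) h
      · simp only [Sum.elim_inl] at h; injection h with h'; rw [h']
      · simp only [Sum.elim_inl, Sum.elim_inr] at h; exact absurd h (by simp)
      · simp only [Sum.elim_inl, Sum.elim_inr] at h; exact absurd h (by simp)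
      · simp only [Sum.elim_inr] at h; injection h with h'; rw [h']
    · intro x
      cases x with
      | r a => exact ⟨Sum.inl a, rfl⟩
      | sr a => exact ⟨Sum.inr a, rfl⟩
  rw [← Fintype.sum_bijective _ hbij _ (fun v => G.degree v) (fun x => rfl),
    Fintype.sum_sum_type]
  simp only [Sum.elim_inl, Sum.elim_inr]
  -- degrees of reflections
  have hd_sr : ∀ i : ZMod (p * q), G.degree (sr i) = 1 := by
    intro i
    rw [degree_split]
    have e1 : (univ.filter fun j : ZMod (p * q) => G.Adj (sr i) (r j)) = {0} := by
      ext j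
      simp only [mem_filter, mem_univ, true_and, mem_singleton]
      rw [SimpleGraph.adj_comm, hG, adj_r_sr]
    have e2 : (univ.filter fun j : ZMod (p * q) => G.Adj (sr i) (sr j)) = ∅ := by
      ext j
      simp only [mem_filter, mem_univ, true_and, notMem_empty, iff_false]
      exact adj_sr_sr
    rw [e1, e2]
    simp
  -- degrees of rotations: reflection part
  have hB : ∀ i : ZMod (p * q),
      (univ.filter fun j : ZMod (p * q) => G.Adj (r i) (sr j)).card
        = if i = 0 then p * q else 0 := by
    intro i
    by_cases h : i = 0
    · simp only [hG, adj_r_sr, h, eq_self_iff_true, if_true]; simp [ZMod.card]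
    · simp [hG, adj_r_sr, h]
  -- sum over reflections
  have hsum_sr : ∑ i : ZMod (p * q), G.degree (sr i) = p * q := by
    simp only [hd_sr, sum_const, card_univ, ZMod.card, smul_eq_mul, mul_one]
  -- bad sets
  have hbad_subset : ∀ i : ZMod (p * q),
      (if i.val.gcd (p * q) = p then univ.filter (fun j : ZMod (p * q) => j.val.gcd (p * q) = q)
       else if i.val.gcd (p * q) = q then univ.filter (fun j : ZMod (p * q) => j.val.gcd (p * q) = p)
       else ∅) ⊆ univ.erase i := by
    intro i j hj
    rw [mem_erase]
    refine ⟨?_, mem_univ j⟩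
    rintro rfl
    split_ifs at hj with h1 h2
    · rw [mem_filter] at hj
      exact hpq (h1.symm.trans hj.2)
    · rw [mem_filter] at hj
      exact hpq (hj.2.symm.trans h2)
    · exact absurd hj (notMem_empty j)
  have hA : ∀ i : ZMod (p * q),
      (univ.filter fun j : ZMod (p * q) => G.Adj (r i) (r j)) = (univ.erase i) \
        (if i.val.gcd (p * q) = p then univ.filter (fun j : ZMod (p * q) => j.val.gcd (p * q) = q)
         else if i.val.gcd (p * q) = q then univ.filter (fun j : ZMod (p * q) => j.val.gcd (p * q) = p)
         else ∅) := by
    intro i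
    ext j
    simp only [mem_filter, mem_univ, true_and, mem_sdiff, mem_erase]
    rw [hG, adj_r_r]
    constructor
    · rintro ⟨hne, hcomp⟩
      refine ⟨⟨fun h => hne h.symm, trivial⟩, fun hj => ?_⟩
      split_ifs at hj with h1 h2
      · rw [mem_filter] at hj
        exact (incomp_iff hp hq hpq i j).mpr (Or.inl ⟨h1, hj.2⟩) hcomp
      · rw [mem_filter] at hj
        exact (incomp_iff hp hq hpq i j).mpr (Or.inr ⟨h2, hj.2⟩) hcomp
      · exact absurd hj (notMem_empty j)
    · rintro ⟨⟨hne, -⟩, hnot⟩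
      refine ⟨fun h => hne h.symm, ?_⟩
      by_contra hc
      rcases (incomp_iff hp hq hpq i j).mp hc with ⟨h1, h2⟩ | ⟨h1, h2⟩
      · exact hnot (by rw [if_pos h1, mem_filter]; exact ⟨mem_univ j, h2⟩)
      · apply hnot
        rw [if_neg (fun h => hpq (h.symm.trans h1)), if_pos h1, mem_filter]
        exact ⟨mem_univ j, h2⟩
  have hAcard : ∀ i : ZMod (p * q),
      (univ.filter fun j : ZMod (p * q) => G.Adj (r i) (r j)).card +
        (if i.val.gcd (p * q) = p then univ.filter (fun j : ZMod (p * q) => j.val.gcd (p * q) = q)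
         else if i.val.gcd (p * q) = q then univ.filter (fun j : ZMod (p * q) => j.val.gcd (p * q) = p)
         else ∅).card = p * q - 1 := by
    intro i
    rw [hA i, card_sdiff_add_card_eq_card (hbad_subset i), card_erase_of_mem (mem_univ i),
      card_univ, ZMod.card]
  have hbadsum : ∑ i : ZMod (p * q),
      (if i.val.gcd (p * q) = p then univ.filter (fun j : ZMod (p * q) => j.val.gcd (p * q) = q)
       else if i.val.gcd (p * q) = q then univ.filter (fun j : ZMod (p * q) => j.val.gcd (p * q) = p)
       else ∅).card = (q - 1) * (p - 1) + (p - 1) * (q - 1) := by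
    rw [← sum_filter_add_sum_filter_not univ (fun i : ZMod (p * q) => i.val.gcd (p * q) = p)]
    have e1 : ∑ i ∈ univ.filter (fun i : ZMod (p * q) => i.val.gcd (p * q) = p),
        (if i.val.gcd (p * q) = p then univ.filter (fun j : ZMod (p * q) => j.val.gcd (p * q) = q)
         else if i.val.gcd (p * q) = q then univ.filter (fun j : ZMod (p * q) => j.val.gcd (p * q) = p)
         else ∅).card = (q - 1) * (p - 1) := by
      have hconst := Finset.sum_const_nat (m := p - 1)
        (s := univ.filter (fun i : ZMod (p * q) => i.val.gcd (p * q) = p))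
        (f := fun i : ZMod (p * q) =>
          (if i.val.gcd (p * q) = p then univ.filter (fun j : ZMod (p * q) => j.val.gcd (p * q) = q)
           else if i.val.gcd (p * q) = q then univ.filter (fun j : ZMod (p * q) => j.val.gcd (p * q) = p)
           else ∅).card)
        (fun i hi => by simp only [if_pos (mem_filter.mp hi).2]; exact card_Sq hp hq hpq)
      rw [hconst, card_Sp hp hq hpq]
    have e2 : ∑ i ∈ univ.filter (fun i : ZMod (p * q) => ¬ i.val.gcd (p * q) = p),
        (if i.val.gcd (p * q) = p then univ.filter (fun j : ZMod (p * q) => j.val.gcd (p * q) = q)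
         else if i.val.gcd (p * q) = q then univ.filter (fun j : ZMod (p * q) => j.val.gcd (p * q) = p)
         else ∅).card = (p - 1) * (q - 1) := by
      rw [← sum_filter_add_sum_filter_not
        (univ.filter (fun i : ZMod (p * q) => ¬ i.val.gcd (p * q) = p))
        (fun i : ZMod (p * q) => i.val.gcd (p * q) = q)]
      have f1 : ((univ.filter (fun i : ZMod (p * q) => ¬ i.val.gcd (p * q) = p)).filter
          (fun i : ZMod (p * q) => i.val.gcd (p * q) = q))
          = univ.filter (fun i : ZMod (p * q) => i.val.gcd (p * q) = q) := by
        rw [filter_filter]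
        ext j
        simp only [mem_filter, mem_univ, true_and]
        constructor
        · rintro ⟨-, h⟩; exact h
        · intro h; exact ⟨fun h' => hpq (h'.symm.trans h), h⟩
      have g1 : ∑ i ∈ ((univ.filter (fun i : ZMod (p * q) => ¬ i.val.gcd (p * q) = p)).filter
          (fun i : ZMod (p * q) => i.val.gcd (p * q) = q)),
          (if i.val.gcd (p * q) = p then univ.filter (fun j : ZMod (p * q) => j.val.gcd (p * q) = q)
           else if i.val.gcd (p * q) = q then univ.filter (fun j : ZMod (p * q) => j.val.gcd (p * q) = p)
           else ∅).card = (p - 1) * (q - 1) := by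
      
        have hconst := Finset.sum_const_nat (m := q - 1)
          (s := (univ.filter (fun i : ZMod (p * q) => ¬ i.val.gcd (p * q) = p)).filter
            (fun i : ZMod (p * q) => i.val.gcd (p * q) = q))
          (f := fun i : ZMod (p * q) =>
            (if i.val.gcd (p * q) = p then univ.filter (fun j : ZMod (p * q) => j.val.gcd (p * q) = q)
             else if i.val.gcd (p * q) = q then univ.filter (fun j : ZMod (p * q) => j.val.gcd (p * q) = p)
             else ∅).card)
          (fun i hi => by
            rw [mem_filter] at hi
            obtain ⟨hi1, hi2⟩ := hi
            rw [mem_filter] at hi1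
            simp only [if_neg hi1.2, if_pos hi2]
            exact card_Sp hp hq hpq)
        rw [hconst, f1, card_Sq hp hq hpq]
      have g2 : ∑ i ∈ ((univ.filter (fun i : ZMod (p * q) => ¬ i.val.gcd (p * q) = p)).filter
          (fun i : ZMod (p * q) => ¬ i.val.gcd (p * q) = q)),
          (if i.val.gcd (p * q) = p then univ.filter (fun j : ZMod (p * q) => j.val.gcd (p * q) = q)
           else if i.val.gcd (p * q) = q then univ.filter (fun j : ZMod (p * q) => j.val.gcd (p * q) = p)
           else ∅).card = 0 := by
        apply sum_eq_zero
        intro i hi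
        rw [mem_filter] at hi
        obtain ⟨hi1, hi2⟩ := hi
        rw [mem_filter] at hi1
        simp only [if_neg hi1.2, if_neg hi2, card_empty]
      rw [g1, g2, add_zero]
    rw [e1, e2]
  -- assemble
  have hdeg_r : ∀ i : ZMod (p * q), G.degree (r i)
      = (univ.filter fun j : ZMod (p * q) => G.Adj (r i) (r j)).card
        + (if i = 0 then p * q else 0) := by
    intro i
    rw [degree_split, hB i]
  change ∑ i, G.degree (r i) + ∑ i, G.degree (sr i) = _
  simp only [hdeg_r]
  rw [sum_add_distrib, hsum_sr]
  have hite : ∑ i : ZMod (p * q), (if i = 0 then p * q else 0) = p * q := by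
    rw [Finset.sum_ite_eq' univ (0 : ZMod (p * q)) (fun _ => p * q), if_pos (mem_univ _)]
  rw [hite]
  have hSA : (∑ i : ZMod (p * q),
      (univ.filter fun j : ZMod (p * q) => G.Adj (r i) (r j)).card)
      + ((q - 1) * (p - 1) + (p - 1) * (q - 1)) = (p * q) * (p * q - 1) := by
    rw [← hbadsum, ← sum_add_distrib]
    have hconst := Finset.sum_const_nat (m := p * q - 1) (s := (univ : Finset (ZMod (p * q))))
      (f := fun i : ZMod (p * q) =>
        (univ.filter fun j : ZMod (p * q) => G.Adj (r i) (r j)).card +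
          (if i.val.gcd (p * q) = p then univ.filter (fun j : ZMod (p * q) => j.val.gcd (p * q) = q)
           else if i.val.gcd (p * q) = q then univ.filter (fun j : ZMod (p * q) => j.val.gcd (p * q) = p)
           else ∅).card)
      (fun i _ => hAcard i)
    rw [hconst, card_univ, ZMod.card]
  set X := ∑ i : ZMod (p * q),
      (univ.filter fun j : ZMod (p * q) => G.Adj (r i) (r j)).card with hX
  have hp1 : 1 ≤ p := hp.pos
  have hq1 : 1 ≤ q := hq.pos
  have hpq1 : 1 ≤ p * q := Nat.mul_pos hp.pos hq.pos
  have h2pq : 1 ≤ 2 * p * q := Nat.one_le_iff_ne_zero.mpr (by positivity)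
  have hple : p ≤ p * q := Nat.le_mul_of_pos_right p hq.pos
  have hqle : q ≤ p * q := Nat.le_mul_of_pos_left q hp.pos
  zify [hp1, hq1, hpq1, h2pq, hple, hqle] at hSA ⊢
  linear_combination hSA
end
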